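/- For every row-stochastic q^z (m×K), every row-stochastic q^w (n×L), and every μ ∈ (0,∞)^{K×L}, J̄(1^{z*}, 1^{w*}, μ*) − J̄(q^z, q^w, μ) = Σ_{i=1}^m Σ_{j=1}^n θ*_i λ*_j Σ_{k=1}^K Σ_{l=1}^L q^z_{ik} q^w_{jl} · KL(μ*_{z*_i, w*_j}, μ_{kl}) ≥ 0; in particular, J̄ attains its maximum over all such triples at (1^{z*}, 1^{w*}, μ*). -/
import Mathlib


open scoped BigOperators

namespace DCLBM

/-- The indicator (hard-assignment) matrix `1^{z}` of a label vector `z`. -/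
noncomputable def indic {m K : ℕ} (z : Fin m → Fin K) : Fin m → Fin K → ℝ :=
  fun i k => if z i = k then 1 else 0

/-- The soft confusion matrix `R_{kk'}(q, q̃) = (1/m) Σ_i q_{ik} q̃_{ik'}`. -/
noncomputable def Rmat {m K : ℕ} (q qt : Fin m → Fin K → ℝ) (k k' : Fin K) : ℝ :=
  (1 / (m : ℝ)) * ∑ i, q i k * qt i k'

/-- The Poisson Kullback–Leibler divergence `KL(a, b) = a log(a/b) - (a - b)`. -/
noncomputable def KLdiv (a b : ℝ) : ℝ := a * Real.log (a / b) - (a - b)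

/-- The population separation functional
`G(q^z, q^w, μ) = Σ_{k,l,k',l'} R_{kk'}(1^{z*}, q^z) R_{ll'}(1^{w*}, q^w) KL(μ*_{kl}, μ_{k'l'})`. -/
noncomputable def Gfun {m n K L : ℕ} (zs : Fin m → Fin K) (ws : Fin n → Fin L)
    (μs : Fin K → Fin L → ℝ)
    (qz : Fin m → Fin K → ℝ) (qw : Fin n → Fin L → ℝ) (μm : Fin K → Fin L → ℝ) : ℝ :=
  ∑ k, ∑ l, ∑ k', ∑ l',
    Rmat (indic zs) qz k k' * Rmat (indic ws) qw l l' * KLdiv (μs k l) (μm k' l')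

/-- The distance between two triples `(q^z, q^w, μ)` and `(q̃^z, q̃^w, μ̃)`. -/
noncomputable def distTriple {m n K L : ℕ}
    (qz : Fin m → Fin K → ℝ) (qw : Fin n → Fin L → ℝ) (μm : Fin K → Fin L → ℝ)
    (qz' : Fin m → Fin K → ℝ) (qw' : Fin n → Fin L → ℝ) (μm' : Fin K → Fin L → ℝ) : ℝ :=
  (1 - ∑ k, Rmat qz qz' k k) + (1 - ∑ l, Rmat qw qw' l l) +
    ∑ k, ∑ l, |μm k l - μm' k l|

/-- A matrix is row-stochastic if its entries lie in `[0,1]` and each row sums to `1`. -/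
def RowStoch {m K : ℕ} (q : Fin m → Fin K → ℝ) : Prop :=
  (∀ i k, 0 ≤ q i k ∧ q i k ≤ 1) ∧ (∀ i, ∑ k, q i k = 1)

end DCLBM


lemma kl_nonneg {a b : ℝ} (ha : 0 < a) (hb : 0 < b) : 0 ≤ DCLBM.KLdiv a b := by
  unfold DCLBM.KLdiv
  have h := Real.log_le_sub_one_of_pos (div_pos hb ha)
  have hlog : Real.log (b / a) = - Real.log (a / b) := by
    rw [← Real.log_inv, inv_div]
  rw [hlog] at h
  have hba : a * (b / a) = b := by field_simp
  nlinarith [mul_le_mul_of_nonneg_left h ha.le]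

/-- with `M_{ij} = θ*_i λ*_j μ*_{z*_i w*_j}` and
`J̄(q^z, q^w, μ) = -Σ_{ij} θ*_i λ*_j Σ_{kl} q^z_{ik} q^w_{jl} μ_{kl}
 + Σ_{ij} M_{ij} Σ_{kl} q^z_{ik} q^w_{jl} log μ_{kl}`, one has
`J̄(1^{z*}, 1^{w*}, μ*) - J̄(q^z, q^w, μ)
 = Σ_{ij} θ*_i λ*_j Σ_{kl} q^z_{ik} q^w_{jl} KL(μ*_{z*_i w*_j}, μ_{kl}) ≥ 0`,
so `J̄` is maximized at `(1^{z*}, 1^{w*}, μ*)`. -/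
theorem statement17 (m n K L : ℕ) (hm : 0 < m) (hn : 0 < n) (hK : 0 < K) (hL : 0 < L)
    (zs : Fin m → Fin K) (ws : Fin n → Fin L)
    (θs : Fin m → ℝ) (lams : Fin n → ℝ) (μs : Fin K → Fin L → ℝ)
    (hθs : ∀ i, 0 < θs i) (hlams : ∀ j, 0 < lams j) (hμs : ∀ k l, 0 < μs k l)
    (M : Fin m → Fin n → ℝ) (hM : ∀ i j, M i j = θs i * lams j * μs (zs i) (ws j))
    (Jbar : (Fin m → Fin K → ℝ) → (Fin n → Fin L → ℝ) → (Fin K → Fin L → ℝ) → ℝ)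
    (hJbar : ∀ qz qw μm, Jbar qz qw μm =
      -(∑ i, ∑ j, θs i * lams j * (∑ k, ∑ l, qz i k * qw j l * μm k l))
      + ∑ i, ∑ j, M i j * (∑ k, ∑ l, qz i k * qw j l * Real.log (μm k l))) :
    ∀ (qz : Fin m → Fin K → ℝ) (qw : Fin n → Fin L → ℝ) (μm : Fin K → Fin L → ℝ),
      DCLBM.RowStoch qz → DCLBM.RowStoch qw → (∀ k l, 0 < μm k l) →
      Jbar (DCLBM.indic zs) (DCLBM.indic ws) μs - Jbar qz qw μm =
        (∑ i, ∑ j, θs i * lams j *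
          (∑ k, ∑ l, qz i k * qw j l * DCLBM.KLdiv (μs (zs i) (ws j)) (μm k l))) ∧
      0 ≤ (∑ i, ∑ j, θs i * lams j *
          (∑ k, ∑ l, qz i k * qw j l * DCLBM.KLdiv (μs (zs i) (ws j)) (μm k l))) ∧
      Jbar qz qw μm ≤ Jbar (DCLBM.indic zs) (DCLBM.indic ws) μs := by
  intro qz qw μm hqz hqw hμm
  have hind : ∀ (f : Fin K → Fin L → ℝ) (i : Fin m) (j : Fin n),
      (∑ k, ∑ l, DCLBM.indic zs i k * DCLBM.indic ws j l * f k l) = f (zs i) (ws j) := by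
    intro f i j
    simp [DCLBM.indic, ite_mul, mul_ite]
  have hsum1 : ∀ (i : Fin m) (j : Fin n), (∑ k, ∑ l, qz i k * qw j l) = 1 := by
    intro i j
    simp_rw [← Finset.mul_sum, ← Finset.sum_mul]
    rw [hqz.2 i, hqw.2 j, one_mul]
  have keyKL : ∀ (i : Fin m) (j : Fin n),
      (∑ k, ∑ l, qz i k * qw j l * DCLBM.KLdiv (μs (zs i) (ws j)) (μm k l))
      = (μs (zs i) (ws j) * Real.log (μs (zs i) (ws j)) - μs (zs i) (ws j))
        - μs (zs i) (ws j) * (∑ k, ∑ l, qz i k * qw j l * Real.log (μm k l))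
        + (∑ k, ∑ l, qz i k * qw j l * μm k l) := by
    intro i j
    have ha : (0:ℝ) < μs (zs i) (ws j) := hμs _ _
    have hterm : ∀ (k : Fin K) (l : Fin L),
        qz i k * qw j l * DCLBM.KLdiv (μs (zs i) (ws j)) (μm k l)
        = (qz i k * qw j l) *
            (μs (zs i) (ws j) * Real.log (μs (zs i) (ws j)) - μs (zs i) (ws j))
          - μs (zs i) (ws j) * (qz i k * qw j l * Real.log (μm k l))
          + qz i k * qw j l * μm k l := by
      intro k l
      unfold DCLBM.KLdiv
      rw [Real.log_div ha.ne' (hμm k l).ne']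
      ring
    have e1 : (∑ k, ∑ l, (qz i k * qw j l) *
        (μs (zs i) (ws j) * Real.log (μs (zs i) (ws j)) - μs (zs i) (ws j)))
        = μs (zs i) (ws j) * Real.log (μs (zs i) (ws j)) - μs (zs i) (ws j) := by
      simp_rw [← Finset.sum_mul]
      rw [hsum1 i j, one_mul]
    have e2 : (∑ k, ∑ l, μs (zs i) (ws j) * (qz i k * qw j l * Real.log (μm k l)))
        = μs (zs i) (ws j) * (∑ k, ∑ l, qz i k * qw j l * Real.log (μm k l)) := by
      simp_rw [← Finset.mul_sum]
    simp_rw [hterm]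
    simp only [Finset.sum_add_distrib, Finset.sum_sub_distrib]
    rw [e1, e2]
  have hstep : ∀ (i : Fin m) (j : Fin n),
      (-(θs i * lams j * μs (zs i) (ws j)) + M i j * Real.log (μs (zs i) (ws j)))
      - (-(θs i * lams j * (∑ k, ∑ l, qz i k * qw j l * μm k l))
        + M i j * (∑ k, ∑ l, qz i k * qw j l * Real.log (μm k l)))
      = θs i * lams j *
          (∑ k, ∑ l, qz i k * qw j l * DCLBM.KLdiv (μs (zs i) (ws j)) (μm k l)) := by
    intro i j
    rw [keyKL i j, hM i j]
    ring
  have hEq : Jbar (DCLBM.indic zs) (DCLBM.indic ws) μs - Jbar qz qw μm =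
      (∑ i, ∑ j, θs i * lams j *
        (∑ k, ∑ l, qz i k * qw j l * DCLBM.KLdiv (μs (zs i) (ws j)) (μm k l))) := by
    rw [hJbar, hJbar]
    simp only [hind]
    have hR : (∑ i, ∑ j, θs i * lams j *
        (∑ k, ∑ l, qz i k * qw j l * DCLBM.KLdiv (μs (zs i) (ws j)) (μm k l)))
        = ∑ i, ∑ j,
          ((-(θs i * lams j * μs (zs i) (ws j)) + M i j * Real.log (μs (zs i) (ws j)))
          - (-(θs i * lams j * (∑ k, ∑ l, qz i k * qw j l * μm k l))
            + M i j * (∑ k, ∑ l, qz i k * qw j l * Real.log (μm k l)))) :=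
      Finset.sum_congr rfl fun i _ => Finset.sum_congr rfl fun j _ => (hstep i j).symm
    rw [hR]
    simp only [Finset.sum_add_distrib, Finset.sum_sub_distrib, Finset.sum_neg_distrib]

  have hNonneg : 0 ≤ (∑ i, ∑ j, θs i * lams j *
      (∑ k, ∑ l, qz i k * qw j l * DCLBM.KLdiv (μs (zs i) (ws j)) (μm k l))) := by
    apply Finset.sum_nonneg; intro i _
    apply Finset.sum_nonneg; intro j _
    apply mul_nonneg (mul_nonneg (hθs i).le (hlams j).le)
    apply Finset.sum_nonneg; intro k _
    apply Finset.sum_nonneg; intro l _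
    exact mul_nonneg (mul_nonneg (hqz.1 i k).1 (hqw.1 j l).1)
      (kl_nonneg (hμs (zs i) (ws j)) (hμm k l))
  exact ⟨hEq, hNonneg, by linarith⟩
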